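/- If A is a 2-zpd algebra, then every inner derivation u ↦ uw − wu of A can be written as a finite sum Σᵢ L_{xᵢ}R_{yᵢ} of composites of left and right multiplications, where xᵢ, yᵢ ∈ A satisfy xᵢyᵢ = yᵢxᵢ = 0 for every i. -/

import Mathlib

open TensorProduct

def IsZpd (F A : Type*) [Field F] [Ring A] [Algebra F A] : Prop :=
  ∀ φ : A →ₗ[F] A →ₗ[F] F, (∀ x y : A, x * y = 0 → φ x y = 0) →
    ∃ τ : A →ₗ[F] F, ∀ x y : A, φ x y = τ (x * y)

def Is2Zpd (F A : Type*) [Field F] [Ring A] [Algebra F A] : Prop :=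
  ∀ φ : A →ₗ[F] A →ₗ[F] F, (∀ x y : A, x * y = 0 → y * x = 0 → φ x y = 0) →
    ∃ τ₁ τ₂ : A →ₗ[F] F, ∀ x y : A, φ x y = τ₁ (x * y) + τ₂ (y * x)

def IsZLpd (F A : Type*) [Field F] [Ring A] [Algebra F A] : Prop :=
  ∀ φ : A →ₗ[F] A →ₗ[F] F, (∀ x y : A, x * y = y * x → φ x y = 0) →
    ∃ τ : A →ₗ[F] F, ∀ x y : A, φ x y = τ (x * y - y * x)

theorem two_sided_zpd_inner_derivation_form (F A : Type*) [Field F] [Ring A]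
    [Algebra F A] (h : Is2Zpd F A) :
    ∀ w : A, ∃ (n : ℕ) (x y : Fin n → A),
      (∀ i, x i * y i = 0 ∧ y i * x i = 0) ∧
      ∀ u : A, u * w - w * u = ∑ i, x i * u * y i := by
  intro w
  set s : Set (A ⊗[F] A) := {t | ∃ a b : A, a * b = 0 ∧ b * a = 0 ∧ t = a ⊗ₜ[F] b}
  set S : Submodule F (A ⊗[F] A) := Submodule.span F s
  have hmem : (1 : A) ⊗ₜ[F] w - w ⊗ₜ[F] (1 : A) ∈ S := by
    by_contra hx
    obtain ⟨f, hf0, hfS⟩ := S.exists_dual_map_eq_bot_of_notMem hx inferInstance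
    have hker : ∀ t ∈ S, f t = 0 := fun t ht => by
      have : f t ∈ S.map f := Submodule.mem_map_of_mem ht
      rwa [hfS, Submodule.mem_bot] at this
    set φ : A →ₗ[F] A →ₗ[F] F := (TensorProduct.mk F A A).compr₂ f with hφ
    obtain ⟨τ₁, τ₂, hτ⟩ := h φ (fun x y hxy hyx =>
      hker _ (Submodule.subset_span ⟨x, y, hxy, hyx, rfl⟩))
    apply hf0
    have h1 : f ((1 : A) ⊗ₜ[F] w) = τ₁ w + τ₂ w := by
      have := hτ 1 w; simpa [hφ] using this
    have h2 : f (w ⊗ₜ[F] (1 : A)) = τ₁ w + τ₂ w := by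
      have := hτ w 1; simpa [hφ, add_comm] using this
    rw [map_sub, h1, h2, sub_self]
  obtain ⟨n, c, g, hg⟩ := Submodule.mem_span_set'.mp hmem
  choose a b hab hba he using fun i => (g i).2
  refine ⟨n, fun i => c i • a i, fun i => b i, fun i => ?_, fun u => ?_⟩
  · constructor
    · rw [smul_mul_assoc, hab, smul_zero]
    · rw [mul_smul_comm, hba, smul_zero]
  · set m : A ⊗[F] A →ₗ[F] A :=
      TensorProduct.lift ((LinearMap.mul F A).comp (LinearMap.mulRight F u))
    have hm : ∀ x y : A, m (x ⊗ₜ[F] y) = x * u * y := fun x y => rfl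
    have := congrArg m hg
    rw [map_sum] at this
    calc u * w - w * u = m ((1:A) ⊗ₜ[F] w - w ⊗ₜ[F] (1:A)) := by
          rw [map_sub, hm, hm, one_mul, mul_one]
      _ = ∑ i, m (c i • (g i : A ⊗[F] A)) := this.symm
      _ = ∑ i, (c i • a i) * u * b i := by
          refine Finset.sum_congr rfl fun i _ => ?_
          rw [map_smul, he i, hm, smul_mul_assoc, smul_mul_assoc]
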